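/- For every t ∈ ℂ with t ≠ 0, the polynomial g = x² + x·w² + z²·w − t·w³ ∈ ℂ[x,z,w] has local Milnor number 4 at the origin: dim_ℂ O/J(g)·O = 4, where O = ℂ[x,z,w]_{(x,z,w)} is the localization of ℂ[x,z,w] at the maximal ideal of the origin and J(g) is the Jacobian ideal of g. (This is the generic D₄ singularity at infinity of the compactified fibres 𝕐_{0,t}, t ≠ 0, of f₀ = x²y + x + z² in the paper's Example 8.6, computed in the affine chart Y = 1.) -/

import Mathlib

open MvPolynomial

noncomputable section

/-- The maximal ideal of the origin in ℂ[x,z,w] (variables: X 0 = x, X 1 = z, X 2 = w),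
    realized as the kernel of evaluation at 0. -/
def mOrigin₃ : Ideal (MvPolynomial (Fin 3) ℂ) := RingHom.ker (eval (0 : Fin 3 → ℂ))

instance : mOrigin₃.IsMaximal :=
  RingHom.ker_isMaximal_of_surjective _ (fun r => ⟨C r, by simp⟩)

/-- g = x² + x·w² + z²·w − t·w³ (variables: X 0 = x, X 1 = z, X 2 = w). -/
def g₈₆' (t : ℂ) : MvPolynomial (Fin 3) ℂ :=
  X 0 ^ 2 + X 0 * X 2 ^ 2 + X 1 ^ 2 * X 2 - C t * X 2 ^ 3

abbrev A3 : Type := MvPolynomial (Fin 3) ℂ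

def Qt (t : ℂ) : Ideal A3 :=
  Ideal.span {2 * X 0 + X 2 ^ 2, 2 * (X 1 * X 2),
    2 * (X 0 * X 2) + X 1 ^ 2 - 3 * C t * X 2 ^ 2, X 2 ^ 3}

lemma mem_congr {I : Ideal A3} {p q : A3} (h : p ∈ I) (e : q = p) : q ∈ I := e ▸ h

lemma smem_congr {W : Submodule ℂ A3} {p q : A3} (h : p ∈ W) (e : q = p) : q ∈ W := e ▸ h

variable (t : ℂ)

lemma hf1 : (2 * X 0 + X 2 ^ 2 : A3) ∈ Qt t := Ideal.subset_span (by simp)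
lemma hf2 : (2 * (X 1 * X 2) : A3) ∈ Qt t := Ideal.subset_span (by simp)
lemma hf3 : (2 * (X 0 * X 2) + X 1 ^ 2 - 3 * C t * X 2 ^ 2 : A3) ∈ Qt t :=
  Ideal.subset_span (by simp)
lemma hf4 : (X 2 ^ 3 : A3) ∈ Qt t := Ideal.subset_span (by simp)

lemma half_mem {t : ℂ} {p : A3} (h : 2 * p ∈ Qt t) : p ∈ Qt t := by
  have h2 := (Qt t).mul_mem_left (C (1/2)) h
  rwa [show (C (1/2:ℂ) : A3) * (2 * p) = p from by
    rw [← mul_assoc, ← map_ofNat (C : ℂ →+* A3) 2, ← C_mul]; norm_num] at h2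

lemma hxw : (X 0 * X 2 : A3) ∈ Qt t := by
  apply half_mem
  exact mem_congr (Ideal.add_mem _ ((Qt t).mul_mem_left (X 2) (hf1 t))
    ((Qt t).mul_mem_left (-1) (hf4 t))) (by ring)

lemma hzw : (X 1 * X 2 : A3) ∈ Qt t := half_mem (hf2 t)

lemma hz2 : (X 1 ^ 2 - 3 * C t * X 2 ^ 2 : A3) ∈ Qt t :=
  mem_congr (Ideal.add_mem _ (hf3 t) ((Qt t).mul_mem_left (-2) (hxw t))) (by ring)

lemma hx2 : (X 0 ^ 2 : A3) ∈ Qt t := by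
  apply half_mem
  exact mem_congr (Ideal.add_mem _ ((Qt t).mul_mem_left (X 0) (hf1 t))
    ((Qt t).mul_mem_left (-X 2) (hxw t))) (by ring)

lemma hxz : (X 0 * X 1 : A3) ∈ Qt t := by
  apply half_mem
  exact mem_congr (Ideal.add_mem _ ((Qt t).mul_mem_left (X 1) (hf1 t))
    ((Qt t).mul_mem_left (-X 2) (hzw t))) (by ring)

lemma hz3 : (X 1 ^ 3 : A3) ∈ Qt t :=
  mem_congr (Ideal.add_mem _ ((Qt t).mul_mem_left (X 1) (hz2 t))
    ((Qt t).mul_mem_left (3 * C t * X 2) (hzw t))) (by ring)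

lemma cube_mem {t : ℂ} {r : A3} (hr : r ∈ Ideal.span (Set.range (X : Fin 3 → A3))) :
    r ^ 3 ∈ Qt t := by
  rw [Ideal.mem_span_range_iff_exists_fun] at hr
  obtain ⟨c, rfl⟩ := hr
  rw [Fin.sum_univ_three]
  have e : (c 0 * X 0 + c 1 * X 1 + c 2 * X 2 : A3) ^ 3 =
      (c 0 ^ 3 * X 0 + 3 * c 0 ^ 2 * c 1 * X 1 + 3 * c 0 ^ 2 * c 2 * X 2) * X 0 ^ 2
      + (3 * c 0 * c 1 ^ 2 * X 1 + 6 * c 0 * c 1 * c 2 * X 2) * (X 0 * X 1)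
      + (3 * c 0 * c 2 ^ 2 * X 2) * (X 0 * X 2)
      + (3 * c 1 ^ 2 * c 2 * X 1 + 3 * c 1 * c 2 ^ 2 * X 2) * (X 1 * X 2)
      + c 1 ^ 3 * X 1 ^ 3 + c 2 ^ 3 * X 2 ^ 3 := by ring
  rw [e]
  refine Ideal.add_mem _ (Ideal.add_mem _ (Ideal.add_mem _ (Ideal.add_mem _ (Ideal.add_mem _
    ((Qt t).mul_mem_left _ (hx2 t)) ((Qt t).mul_mem_left _ (hxz t)))
    ((Qt t).mul_mem_left _ (hxw t))) ((Qt t).mul_mem_left _ (hzw t)))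
    ((Qt t).mul_mem_left _ (hz3 t))) ((Qt t).mul_mem_left _ (hf4 t))

lemma sub_C_mem (p : A3) :
    p - C (eval (0 : Fin 3 → ℂ) p) ∈ Ideal.span (Set.range (X : Fin 3 → A3)) := by
  induction p using MvPolynomial.induction_on with
  | C a => simp
  | add p q hp hq =>
    have := Ideal.add_mem _ hp hq
    exact mem_congr this (by simp; ring)
  | mul_X p i hp =>
    have : p * X i ∈ Ideal.span (Set.range (X : Fin 3 → A3)) :=
      Ideal.mul_mem_left _ p (Ideal.subset_span ⟨i, rfl⟩)
    exact mem_congr this (by simp)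

lemma mk_units {t : ℂ} (y : mOrigin₃.primeCompl) :
    IsUnit (Ideal.Quotient.mk (Qt t) (y : A3)) := by
  obtain ⟨y, hy⟩ := y
  have hc : eval (0 : Fin 3 → ℂ) y ≠ 0 := by
    simpa [mOrigin₃, RingHom.mem_ker] using hy
  set c := eval (0 : Fin 3 → ℂ) y with hcdef
  have hunit : IsUnit (Ideal.Quotient.mk (Qt t) (C c)) := by
    refine IsUnit.of_mul_eq_one (Ideal.Quotient.mk (Qt t) (C c⁻¹)) ?_
    rw [← map_mul, ← C_mul, mul_inv_cancel₀ hc]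
    simp
  have hnil : IsNilpotent (Ideal.Quotient.mk (Qt t) (y - C c)) := by
    refine ⟨3, ?_⟩
    rw [← map_pow, Ideal.Quotient.eq_zero_iff_mem]
    exact cube_mem (sub_C_mem y)
  have := hnil.isUnit_add_left_of_commute hunit (Commute.all _ _)
  simpa using this

lemma hpd0 : pderiv 0 (g₈₆' t) = 2 * X 0 + X 2 ^ 2 := by simp [g₈₆', map_ofNat]
lemma hpd1 : pderiv 1 (g₈₆' t) = 2 * (X 1 * X 2) := by simp [g₈₆', map_ofNat]; ring
lemma hpd2 : pderiv 2 (g₈₆' t) = 2 * (X 0 * X 2) + X 1 ^ 2 - 3 * C t * X 2 ^ 2 := by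
  simp [g₈₆', map_ofNat]; ring

abbrev Jt (t : ℂ) : Ideal A3 :=
  Ideal.span {pderiv 0 (g₈₆' t), pderiv 1 (g₈₆' t), pderiv 2 (g₈₆' t)}

abbrev O3 : Type := Localization.AtPrime mOrigin₃
abbrev φ3 : A3 →+* O3 := algebraMap A3 O3

lemma map_J_eq (ht : t ≠ 0) : Ideal.map φ3 (Jt t) = Ideal.map φ3 (Qt t) := by
  apply le_antisymm
  · apply Ideal.map_mono
    rw [Ideal.span_le]
    intro s hs
    simp only [Set.mem_insert_iff, Set.mem_singleton_iff] at hs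
    rcases hs with rfl | rfl | rfl
    · rw [hpd0]; exact hf1 t
    · rw [hpd1]; exact hf2 t
    · rw [hpd2]; exact hf3 t
  · rw [Qt, Ideal.map_span, Ideal.span_le]
    rintro s ⟨p, hp, rfl⟩
    simp only [Set.mem_insert_iff, Set.mem_singleton_iff] at hp
    have hmem : ∀ q ∈ Jt t, φ3 q ∈ Ideal.map φ3 (Jt t) := fun q hq => Ideal.mem_map_of_mem _ hq
    rcases hp with rfl | rfl | rfl | rfl
    · rw [← hpd0 t]; exact hmem _ (Ideal.subset_span (by simp))
    · rw [← hpd1 t]; exact hmem _ (Ideal.subset_span (by simp))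
    · rw [← hpd2 t]; exact hmem _ (Ideal.subset_span (by simp))
    · -- φ3 (X 2 ^ 3) ∈ map
      have hs : (2 * X 2 + 6 * C t : A3) ∈ mOrigin₃.primeCompl := by
        simp only [Ideal.primeCompl, Submonoid.mem_mk, Subsemigroup.mem_mk, Set.mem_compl_iff,
          SetLike.mem_coe, mOrigin₃, RingHom.mem_ker]
        simp [ht, map_ofNat]
      have hu : IsUnit (φ3 (2 * X 2 + 6 * C t)) :=
        IsLocalization.map_units O3 (⟨_, hs⟩ : mOrigin₃.primeCompl)
      have hcomb : (2 * X 2 + 6 * C t) * X 2 ^ 3 ∈ Jt t := by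
        have e : ((2 * X 2 + 6 * C t) * X 2 ^ 3 : A3) =
            (2 * X 2 ^ 2) * pderiv 0 (g₈₆' t) + X 1 * pderiv 1 (g₈₆' t)
              + (-(2 * X 2)) * pderiv 2 (g₈₆' t) := by
          rw [hpd0, hpd1, hpd2]; ring
        rw [e]
        refine Ideal.add_mem _ (Ideal.add_mem _ ?_ ?_) ?_ <;>
          exact Ideal.mul_mem_left _ _ (Ideal.subset_span (by simp))
      obtain ⟨u, hu'⟩ := hu
      have h2 : φ3 ((2 * X 2 + 6 * C t) * X 2 ^ 3) ∈ Ideal.map φ3 (Jt t) :=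
        Ideal.mem_map_of_mem _ hcomb
      rw [map_mul, ← hu'] at h2
      have h3 := (Ideal.map φ3 (Jt t)).mul_mem_left (↑u⁻¹) h2
      rwa [← mul_assoc, Units.inv_mul, one_mul] at h3

def G0 (t : ℂ) : O3 →+* A3 ⧸ Qt t :=
  IsLocalization.lift (M := mOrigin₃.primeCompl) (S := O3)
    (g := Ideal.Quotient.mk (Qt t)) (fun y => mk_units y)

lemma G0_phi (a : A3) : G0 t (φ3 a) = Ideal.Quotient.mk (Qt t) a :=
  IsLocalization.lift_eq _ a

def Ft (t : ℂ) : A3 ⧸ Qt t →+* O3 ⧸ Ideal.map φ3 (Qt t) :=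
  Ideal.quotientMap _ φ3 Ideal.le_comap_map

def Gt (t : ℂ) : O3 ⧸ Ideal.map φ3 (Qt t) →+* A3 ⧸ Qt t :=
  Ideal.Quotient.lift _ (G0 t) (by
    intro x hx
    have hle : Ideal.map φ3 (Qt t) ≤ RingHom.ker (G0 t) := by
      rw [Ideal.map_le_iff_le_comap]
      intro a ha
      simp only [Ideal.mem_comap, RingHom.mem_ker, G0_phi, Ideal.Quotient.eq_zero_iff_mem]
      exact ha
    exact RingHom.mem_ker.mp (hle hx))

lemma FG_inv : (Ft t).comp (Gt t) = RingHom.id _ := by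
  apply Ideal.Quotient.ringHom_ext
  apply IsLocalization.ringHom_ext mOrigin₃.primeCompl
  refine RingHom.ext fun a => ?_
  simp only [RingHom.comp_apply, RingHom.id_apply]
  show Ft t (Gt t (Ideal.Quotient.mk _ (φ3 a))) = Ideal.Quotient.mk _ (φ3 a)
  rw [Gt, Ideal.Quotient.lift_mk, G0_phi, Ft, Ideal.quotientMap_mk]

lemma GF_inv : (Gt t).comp (Ft t) = RingHom.id _ := by
  apply Ideal.Quotient.ringHom_ext
  refine RingHom.ext fun a => ?_
  simp only [RingHom.comp_apply, RingHom.id_apply]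
  show Gt t (Ft t (Ideal.Quotient.mk _ a)) = Ideal.Quotient.mk _ a
  rw [Ft, Ideal.quotientMap_mk, Gt, Ideal.Quotient.lift_mk, G0_phi]

def Et (t : ℂ) : (A3 ⧸ Qt t) ≃+* (O3 ⧸ Ideal.map φ3 (Qt t)) :=
  RingEquiv.ofRingHom (Ft t) (Gt t) (FG_inv t) (GF_inv t)

def EtAlg (t : ℂ) : (A3 ⧸ Qt t) ≃ₐ[ℂ] (O3 ⧸ Ideal.map φ3 (Qt t)) :=
  AlgEquiv.ofRingEquiv (f := Et t) (by
    intro c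
    show Ft t (algebraMap ℂ _ c) = algebraMap ℂ _ c
    rw [IsScalarTower.algebraMap_apply ℂ A3 (A3 ⧸ Qt t),
      IsScalarTower.algebraMap_apply ℂ O3 (O3 ⧸ Ideal.map φ3 (Qt t)),
      IsScalarTower.algebraMap_apply ℂ A3 O3]
    simp [Ft, Ideal.quotientMap_mk, Ideal.Quotient.algebraMap_eq])


abbrev ev0 : A3 →+* ℂ := eval (0 : Fin 3 → ℂ)

lemma keyP : ∀ q ∈ Qt t,
    ev0 q = 0 ∧ ev0 (pderiv 1 q) = 0 ∧ ev0 (pderiv 2 q) = 0 ∧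
      ev0 (pderiv 2 (pderiv 2 q)) - ev0 (pderiv 0 q)
        + 3 * t * ev0 (pderiv 1 (pderiv 1 q)) = 0 := by
  intro q hq
  refine Submodule.span_induction ?_ ?_ ?_ ?_ hq
  · rintro x hx
    simp only [Set.mem_insert_iff, Set.mem_singleton_iff] at hx
    rcases hx with rfl | rfl | rfl | rfl <;>
      refine ⟨by simp [map_ofNat], by simp [map_ofNat], by simp [map_ofNat], by
        simp [map_ofNat]; try ring⟩
  · exact ⟨by simp, by simp, by simp, by simp⟩
  · rintro x y - - ⟨h1, h2, h3, h4⟩ ⟨k1, k2, k3, k4⟩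
    refine ⟨by rw [map_add, h1, k1, add_zero],
      by rw [map_add, map_add, h2, k2, add_zero],
      by rw [map_add, map_add, h3, k3, add_zero], ?_⟩
    simp only [map_add]
    linear_combination h4 + k4
  · rintro a x - ⟨h1, h2, h3, h4⟩
    simp only [smul_eq_mul, pderiv_mul, map_add, map_mul]
    refine ⟨by rw [h1, mul_zero], ?_, ?_, ?_⟩
    · rw [h1, h2]; ring
    · rw [h1, h3]; ring
    · linear_combination (ev0 (pderiv 2 (pderiv 2 a)) - ev0 (pderiv 0 a)
          + 3 * t * ev0 (pderiv 1 (pderiv 1 a))) * h1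
        + (2 * ev0 (pderiv 2 a)) * h3 + (3 * t * 2 * ev0 (pderiv 1 a)) * h2
        + ev0 a * h4

abbrev Vt (t : ℂ) : Submodule ℂ A3 :=
  (Qt t).restrictScalars ℂ ⊔ Submodule.span ℂ {1, X 1, X 2, X 2 ^ 2}

lemma half_smul_mem {W : Submodule ℂ A3} {p : A3} (h : 2 * p ∈ W) : p ∈ W := by
  have h2 := W.smul_mem (1/2 : ℂ) h
  rwa [smul_eq_C_mul, show (C (1/2:ℂ) : A3) * (2 * p) = p from by
    rw [← mul_assoc, ← map_ofNat (C : ℂ →+* A3) 2, ← C_mul]; norm_num] at h2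

lemma q_le_v {p : A3} (h : p ∈ Qt t) : p ∈ Vt t := Submodule.mem_sup_left h

lemma sp_le_v {p : A3} (h : p ∈ ({1, X 1, X 2, X 2 ^ 2} : Set A3)) : p ∈ Vt t :=
  Submodule.mem_sup_right (Submodule.subset_span h)

lemma mono_mem : ∀ a b c : ℕ, (X 0 ^ a * X 1 ^ b * X 2 ^ c : A3) ∈ Vt t := by
  intro a b c
  match a, b, c with
  | (a+2), b, c =>
    exact q_le_v t (mem_congr ((Qt t).mul_mem_left (X 0 ^ a * X 1 ^ b * X 2 ^ c) (hx2 t))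
      (by ring))
  | 1, (b+1), c =>
    exact q_le_v t (mem_congr ((Qt t).mul_mem_left (X 1 ^ b * X 2 ^ c) (hxz t)) (by ring))
  | 1, 0, (c+1) =>
    exact q_le_v t (mem_congr ((Qt t).mul_mem_left (X 2 ^ c) (hxw t)) (by ring))
  | 1, 0, 0 =>
    apply half_smul_mem
    have h1 : (2 * X 0 + X 2 ^ 2 : A3) ∈ Vt t := q_le_v t (hf1 t)
    have h2 : (X 2 ^ 2 : A3) ∈ Vt t := sp_le_v t (by simp)
    exact smem_congr (Submodule.sub_mem _ h1 h2) (by ring)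
  | 0, (b+1), (c+1) =>
    exact q_le_v t (mem_congr ((Qt t).mul_mem_left (X 1 ^ b * X 2 ^ c) (hzw t)) (by ring))
  | 0, 0, 0 => exact smem_congr (sp_le_v t (show (1:A3) ∈ _ by simp)) (by ring)
  | 0, 0, 1 => exact smem_congr (sp_le_v t (show (X 2:A3) ∈ _ by simp)) (by ring)
  | 0, 0, 2 => exact smem_congr (sp_le_v t (show (X 2^2:A3) ∈ _ by simp)) (by ring)
  | 0, 0, (c+3) =>
    exact q_le_v t (mem_congr ((Qt t).mul_mem_left (X 2 ^ c) (hf4 t)) (by ring))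
  | 0, 1, 0 => exact smem_congr (sp_le_v t (show (X 1:A3) ∈ _ by simp)) (by ring)
  | 0, 2, 0 =>
    have h1 : (X 1 ^ 2 - 3 * C t * X 2 ^ 2 : A3) ∈ Vt t := q_le_v t (hz2 t)
    have h2 : (X 2 ^ 2 : A3) ∈ Vt t := sp_le_v t (by simp)
    have h3 := (Vt t).smul_mem (3 * t : ℂ) h2
    rw [smul_eq_C_mul] at h3
    refine smem_congr (Submodule.add_mem _ h1 h3) ?_
    rw [map_mul, show (C (3:ℂ) : A3) = 3 from map_ofNat _ 3]
    ring
  | 0, (b+3), 0 =>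
    exact q_le_v t (mem_congr ((Qt t).mul_mem_left (X 1 ^ b) (hz3 t)) (by ring))

lemma monomial_one_eq (u : Fin 3 →₀ ℕ) :
    (monomial u 1 : A3) = X 0 ^ (u 0) * X 1 ^ (u 1) * X 2 ^ (u 2) := by
  rw [monomial_eq, C_1, one_mul, Finsupp.prod_fintype _ _ (fun i => pow_zero _),
    Fin.prod_univ_three]

lemma Vtop : Vt t = ⊤ := by
  rw [eq_top_iff]
  rintro p -
  induction p using MvPolynomial.induction_on' with
  | monomial u a =>
    have : (monomial u a : A3) = a • monomial u 1 := by
      rw [smul_eq_C_mul, C_mul_monomial, mul_one]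
    rw [this]
    exact (Vt t).smul_mem a (monomial_one_eq u ▸ mono_mem t (u 0) (u 1) (u 2))
  | add p q hp hq => exact Submodule.add_mem _ hp hq

abbrev πt (t : ℂ) : A3 →ₐ[ℂ] A3 ⧸ Qt t := Ideal.Quotient.mkₐ ℂ (Qt t)

abbrev bt (t : ℂ) : Fin 4 → A3 ⧸ Qt t :=
  ![πt t 1, πt t (X 1), πt t (X 2), πt t (X 2 ^ 2)]

lemma b_span : ⊤ ≤ Submodule.span ℂ (Set.range (bt t)) := by
  intro x _
  obtain ⟨p, rfl⟩ := Ideal.Quotient.mkₐ_surjective ℂ (I := Qt t) x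
  have hp : p ∈ Vt t := by rw [Vtop]; trivial
  obtain ⟨q, hq, r, hr, rfl⟩ := Submodule.mem_sup.mp hp
  rw [map_add]
  have hq0 : πt t q = 0 := by
    rw [Ideal.Quotient.mkₐ_eq_mk, Ideal.Quotient.eq_zero_iff_mem]
    exact hq
  rw [hq0, zero_add]
  have : πt t r ∈ Submodule.map (πt t).toLinearMap (Submodule.span ℂ {1, X 1, X 2, X 2 ^ 2}) :=
    Submodule.mem_map_of_mem hr
  rw [Submodule.map_span] at this
  refine Submodule.span_le.mpr ?_ this
  rintro y ⟨z, hz, rfl⟩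
  simp only [Set.mem_insert_iff, Set.mem_singleton_iff] at hz
  rcases hz with rfl | rfl | rfl | rfl
  · exact Submodule.subset_span ⟨0, rfl⟩
  · exact Submodule.subset_span ⟨1, rfl⟩
  · exact Submodule.subset_span ⟨2, rfl⟩
  · exact Submodule.subset_span ⟨3, rfl⟩

lemma b_indep : LinearIndependent ℂ (bt t) := by
  rw [Fintype.linearIndependent_iff]
  intro g hg
  have hsum : ∑ i, g i • bt t i
      = πt t (g 0 • 1 + g 1 • X 1 + g 2 • X 2 + g 3 • X 2 ^ 2) := by
    simp only [map_add, map_smul, Fin.sum_univ_four]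
    rfl
  rw [hsum, Ideal.Quotient.mkₐ_eq_mk, Ideal.Quotient.eq_zero_iff_mem] at hg
  obtain ⟨h1, h2, h3, h4⟩ := keyP t _ hg
  simp only [smul_eq_C_mul] at h1 h2 h3 h4
  simp [map_ofNat] at h1 h2 h3 h4
  intro i
  fin_cases i
  · exact h1
  · exact h2
  · exact h3
  · simpa [h1, h2, h3] using h4

lemma finrank_AQ : Module.finrank ℂ (A3 ⧸ Qt t) = 4 := by
  rw [Module.finrank_eq_card_basis (Module.Basis.mk (b_indep t) (b_span t))]
  simp

/-- for every t ≠ 0, g = x² + xw² + z²w − tw³ has local Milnor number 4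
    at the origin: dim_ℂ O/J(g)·O = 4 (the generic D₄ singularity at infinity of the
    fibres 𝕐_{0,t}, t ≠ 0, in Example 8.6). -/
theorem local_milnor_number_example86_generic (t : ℂ) (ht : t ≠ 0) :
    Module.finrank ℂ
      (Localization.AtPrime mOrigin₃ ⧸
        Ideal.map (algebraMap (MvPolynomial (Fin 3) ℂ) (Localization.AtPrime mOrigin₃))
          (Ideal.span {pderiv 0 (g₈₆' t), pderiv 1 (g₈₆' t), pderiv 2 (g₈₆' t)})) = 4 := by
  have h := map_J_eq t ht
  rw [show (Ideal.span {pderiv 0 (g₈₆' t), pderiv 1 (g₈₆' t), pderiv 2 (g₈₆' t)}) = Jt t from rfl]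
  rw [show (algebraMap (MvPolynomial (Fin 3) ℂ) (Localization.AtPrime mOrigin₃)) = φ3 from rfl]
  rw [h, ← (EtAlg t).toLinearEquiv.finrank_eq]
  exact finrank_AQ t
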